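/- arXiv:1007.5344 — 2 statements merged into one kernel-verified Lean document; each statement's English description precedes it below -/
import Mathlib

section
/- Let k ≥ 2 and n = 2k. Then the radio number of C_n □ C_n satisfies rn(C_n □ C_n) ≥ ((n² − 2)/2)·(k + 2) + 2. -/
open SimpleGraph

/-- `c` is a radio labeling of `G`: labels are positive integers and for every two
distinct vertices `u, v` we have `d(u,v) + |c(u) - c(v)| ≥ 1 + diam(G)`. -/
def IsRadioLabeling {V : Type*} (G : SimpleGraph V) (c : V → ℕ) : Prop :=
  (∀ v, 1 ≤ c v) ∧
    ∀ u v : V, u ≠ v → G.diam + 1 ≤ G.dist u v + Nat.dist (c u) (c v)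

/-- The span of a labeling: the maximum label used. -/
def labelSpan {V : Type*} [Fintype V] (c : V → ℕ) : ℕ := Finset.univ.sup c

/-- The radio number of `G`: the minimum span over all radio labelings. -/
noncomputable def radioNumber {V : Type*} [Fintype V] (G : SimpleGraph V) : ℕ :=
  sInf {s | ∃ c : V → ℕ, IsRadioLabeling G c ∧ labelSpan c = s}


/-- circle metric on `Fin n` -/
def cm {n : ℕ} (a b : Fin n) : ℕ := min (a - b).val (b - a).val

lemma cm_self {n : ℕ} [NeZero n] (a : Fin n) : cm a a = 0 := by
  simp [cm, sub_self]

lemma val_add_cases {n : ℕ} [NeZero n] (x y : Fin n) :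
    (x + y).val = x.val + y.val ∨ (x + y).val + n = x.val + y.val := by
  have hadd : (x + y).val = (x.val + y.val) % n := by rw [Fin.add_def]
  rcases Nat.lt_or_ge (x.val + y.val) n with h | h
  · left; rw [hadd]; exact Nat.mod_eq_of_lt h
  · right
    have h1 := x.isLt
    have h2 := y.isLt
    have hm : (x.val + y.val) % n = x.val + y.val - n := by
      rw [Nat.mod_eq_sub_mod h]
      exact Nat.mod_eq_of_lt (by omega)
    omega

lemma val_neg_sum {n : ℕ} [NeZero n] (x : Fin n) :
    x.val + (-x).val = 0 ∨ x.val + (-x).val = n := by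
  have h : (x + -x).val = 0 := by simp
  rcases val_add_cases x (-x) with h' | h' <;> omega

lemma cmNegSub {n : ℕ} [NeZero n] (a b : Fin n) : -(a - b) = b - a := by abel

lemma cm_triangle {n : ℕ} [NeZero n] (a b c : Fin n) : cm a c ≤ cm a b + cm b c := by
  have key : a - c = (a - b) + (b - c) := by abel
  have h1 : ((a - b) + (b - c)).val = (a-b).val + (b-c).val ∨
      ((a - b) + (b - c)).val + n = (a-b).val + (b-c).val := val_add_cases _ _
  rw [← key] at h1
  have s1 := val_neg_sum (a - b); rw [cmNegSub] at s1
  have s2 := val_neg_sum (b - c); rw [cmNegSub] at s2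
  have s3 := val_neg_sum (a - c); rw [cmNegSub] at s3
  have v1 := (a - c).isLt
  have v2 := (c - a).isLt
  simp only [cm]
  omega

lemma cm_adj {n : ℕ} {u v : Fin n} (h : (cycleGraph n).Adj u v) : cm u v ≤ 1 := by
  rw [cycleGraph_adj'] at h
  simp only [cm]
  omega

/-- perimeter inequality -/
lemma cm_perimeter {n : ℕ} [NeZero n] (a b c : Fin n) :
    cm a b + cm b c + cm c a ≤ n := by
  have key : a - c = (a - b) + (b - c) := by abel
  have h1 : ((a - b) + (b - c)).val = (a-b).val + (b-c).val ∨
      ((a - b) + (b - c)).val + n = (a-b).val + (b-c).val := val_add_cases _ _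
  rw [← key] at h1
  have s1 := val_neg_sum (a - b); rw [cmNegSub] at s1
  have s2 := val_neg_sum (b - c); rw [cmNegSub] at s2
  have s3 := val_neg_sum (a - c); rw [cmNegSub] at s3
  have v1 := (a - b).isLt
  have v2 := (b - c).isLt
  have v3 := (a - c).isLt
  simp only [cm]
  omega



lemma cycle_dist_le_sub {m : ℕ} (hn : 2 ≤ m + 1) (u v : Fin (m + 1)) :
    (cycleGraph (m + 1)).dist u v ≤ (v - u).val := by
  suffices h : ∀ (t : ℕ) (u v : Fin (m + 1)), (v - u).val = t → (cycleGraph (m + 1)).dist u v ≤ t by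
    exact h _ u v rfl
  intro t
  induction t with
  | zero =>
    intro u v h
    have : v - u = 0 := Fin.ext h
    have : v = u := by
      have := sub_eq_zero.mp this
      exact this
    rw [this, SimpleGraph.dist_self]
  | succ t ih =>
    intro u v h
    have hone : (1 : Fin (m + 1)).val = 1 := by
      rw [Fin.val_one']
      exact Nat.mod_eq_of_lt hn
    have hadj : (cycleGraph (m + 1)).Adj u (u + 1) := by
      rw [cycleGraph_adj']
      right
      rw [show u + 1 - u = 1 by abel, hone]
    have hval : (v - (u + 1)).val = t := by
      have key : (v - (u + 1)) + 1 = v - u := by abel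
      rcases val_add_cases (v - (u + 1)) 1 with h' | h' <;>
        rw [key] at h' <;> rw [hone] at h'
      · omega
      · have := (v - (u + 1)).isLt
        omega
    calc (cycleGraph (m + 1)).dist u v
        ≤ (cycleGraph (m + 1)).dist u (u + 1) + (cycleGraph (m + 1)).dist (u + 1) v :=
          Connected.dist_triangle cycleGraph_connected
      _ ≤ 1 + t := by
          have h1 : (cycleGraph (m + 1)).dist u (u + 1) = 1 := dist_eq_one_iff_adj.mpr hadj
          have h2 := ih (u + 1) v hval
          omega
      _ = t + 1 := by omega

lemma cycle_dist_le_cm {m : ℕ} (hn : 2 ≤ m + 1) (u v : Fin (m + 1)) :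
    (cycleGraph (m + 1)).dist u v ≤ cm u v := by
  have h1 := cycle_dist_le_sub hn u v
  have h2 := cycle_dist_le_sub hn v u
  rw [dist_comm] at h2
  simp only [cm]
  omega

lemma prod_dist_le {m : ℕ} (hn : 2 ≤ m + 1) (x y : Fin (m + 1) × Fin (m + 1)) :
    (cycleGraph (m + 1) □ cycleGraph (m + 1)).dist x y ≤ cm x.1 y.1 + cm x.2 y.2 := by
  set G := cycleGraph (m + 1) □ cycleGraph (m + 1) with hG
  have hconn : G.Connected := Connected.boxProd cycleGraph_connected cycleGraph_connected
  have hL : G.dist x (y.1, x.2) ≤ cm x.1 y.1 := by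
    obtain ⟨p, hp⟩ := Connected.exists_walk_length_eq_dist cycleGraph_connected x.1 y.1
    have := SimpleGraph.dist_le ((p.boxProdLeft (cycleGraph (m + 1)) x.2))
    rw [show (p.boxProdLeft (cycleGraph (m + 1)) x.2).length = p.length from Walk.length_map _ _, hp] at this
    exact le_trans this (cycle_dist_le_cm hn _ _)
  have hR : G.dist (y.1, x.2) y ≤ cm x.2 y.2 := by
    obtain ⟨p, hp⟩ := Connected.exists_walk_length_eq_dist cycleGraph_connected x.2 y.2
    have := SimpleGraph.dist_le ((p.boxProdRight (cycleGraph (m + 1)) y.1))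
    rw [show (p.boxProdRight (cycleGraph (m + 1)) y.1).length = p.length from Walk.length_map _ _, hp] at this
    exact le_trans this (cycle_dist_le_cm hn _ _)
  calc G.dist x y ≤ G.dist x (y.1, x.2) + G.dist (y.1, x.2) y := hconn.dist_triangle
    _ ≤ cm x.1 y.1 + cm x.2 y.2 := by omega

lemma M_le_walk {n : ℕ} [NeZero n] {x y : Fin n × Fin n}
    (w : (cycleGraph n □ cycleGraph n).Walk x y) :
    cm x.1 y.1 + cm x.2 y.2 ≤ w.length := by
  induction w with
  | nil => simp [cm_self]
  | @cons u z y h p ih =>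
    rw [Walk.length_cons]
    have t1 : cm u.1 y.1 ≤ cm u.1 z.1 + cm z.1 y.1 := cm_triangle _ _ _
    have t2 : cm u.2 y.2 ≤ cm u.2 z.2 + cm z.2 y.2 := cm_triangle _ _ _
    rcases boxProd_adj.mp h with ⟨ha, hb⟩ | ⟨ha, hb⟩
    · have := cm_adj ha
      have h2 : cm u.2 z.2 = 0 := hb ▸ cm_self _
      omega
    · have := cm_adj ha
      have h2 : cm u.1 z.1 = 0 := hb ▸ cm_self _
      omega

lemma M_le_dist {m : ℕ} (x y : Fin (m + 1) × Fin (m + 1)) :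
    cm x.1 y.1 + cm x.2 y.2 ≤ (cycleGraph (m + 1) □ cycleGraph (m + 1)).dist x y := by
  have hconn : (cycleGraph (m + 1) □ cycleGraph (m + 1)).Connected :=
    Connected.boxProd cycleGraph_connected cycleGraph_connected
  obtain ⟨p, hp⟩ := Connected.exists_walk_length_eq_dist hconn x y
  rw [← hp]
  exact M_le_walk p


lemma prod_dist_le' (n : ℕ) (hn : 2 ≤ n) (x y : Fin n × Fin n) :
    (cycleGraph n □ cycleGraph n).dist x y ≤ cm x.1 y.1 + cm x.2 y.2 := by
  obtain ⟨m, rfl⟩ : ∃ m, n = m + 1 := ⟨n - 1, by omega⟩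
  exact prod_dist_le hn x y

lemma M_le_dist' (n : ℕ) (hn : 2 ≤ n) (x y : Fin n × Fin n) :
    cm x.1 y.1 + cm x.2 y.2 ≤ (cycleGraph n □ cycleGraph n).dist x y := by
  obtain ⟨m, rfl⟩ : ∃ m, n = m + 1 := ⟨n - 1, by omega⟩
  exact M_le_dist x y



lemma cycle_connected' (n : ℕ) (hn : 1 ≤ n) : (cycleGraph n).Connected := by
  obtain ⟨m, rfl⟩ : ∃ m, n = m + 1 := ⟨n - 1, by omega⟩
  exact cycleGraph_connected

lemma prod_connected' (n : ℕ) (hn : 1 ≤ n) :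
    (cycleGraph n □ cycleGraph n).Connected :=
  Connected.boxProd (cycle_connected' n hn) (cycle_connected' n hn)

lemma prod_ediam_ne_top (n : ℕ) (hn : 1 ≤ n) :
    (cycleGraph n □ cycleGraph n).ediam ≠ ⊤ := by
  haveI : NeZero n := ⟨by omega⟩
  obtain ⟨u, v, huv⟩ := exists_edist_eq_ediam_of_finite (G := cycleGraph n □ cycleGraph n)
  rw [← huv]
  exact edist_ne_top_iff_reachable.mpr ((prod_connected' n hn).preconnected u v)

lemma prod_perimeter (n : ℕ) (hn : 2 ≤ n) (u v w : Fin n × Fin n) :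
    (cycleGraph n □ cycleGraph n).dist u v + (cycleGraph n □ cycleGraph n).dist v w +
      (cycleGraph n □ cycleGraph n).dist u w ≤ 2 * n := by
  haveI : NeZero n := ⟨by omega⟩
  have h1 := prod_dist_le' n hn u v
  have h2 := prod_dist_le' n hn v w
  have h3 := prod_dist_le' n hn w u
  rw [dist_comm] at h3
  have p1 := cm_perimeter u.1 v.1 w.1
  have p2 := cm_perimeter u.2 v.2 w.2
  omega

lemma prod_diam_ge (k : ℕ) (hk : 2 ≤ k) :
    2 * k ≤ (cycleGraph (2 * k) □ cycleGraph (2 * k)).diam := by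
  haveI : NeZero (2 * k) := ⟨by omega⟩
  set n := 2 * k with hn
  have hn2 : 2 ≤ n := by omega
  set z : Fin n := ⟨k, by omega⟩ with hz
  have hzval : (z : Fin n).val = k := rfl
  have hcm : cm (0 : Fin n) z = k := by
    have h1 : (z - 0 : Fin n).val = k := by rw [sub_zero]
    have h2 : ((-z : Fin n)).val = k := by
      rcases val_neg_sum z with h | h <;> omega
    have h2' : ((0 : Fin n) - z).val = k := by
      rw [show (0 : Fin n) - z = -z by abel, h2]
    simp only [cm]
    omega
  have hM := M_le_dist' n hn2 (0, 0) (z, z)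
  simp only [hcm] at hM
  calc 2 * k = k + k := by ring
    _ ≤ (cycleGraph n □ cycleGraph n).dist (0, 0) (z, z) := hM
    _ ≤ _ := dist_le_diam (prod_ediam_ne_top n (by omega))

/-- for `n = 2k`, `k ≥ 2`, `rn(C_n □ C_n) ≥ ((n² - 2)/2)(k + 2) + 2`. -/
theorem radioNumber_even_lower_bound (n k : ℕ) (hk : 2 ≤ k) (hn : n = 2 * k) :
    (n ^ 2 - 2) / 2 * (k + 2) + 2 ≤ radioNumber (cycleGraph n □ cycleGraph n) := by
  subst hn
  set n := 2 * k with hn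
  have hn2 : 2 ≤ n := by omega
  haveI : NeZero n := ⟨by omega⟩
  set G := cycleGraph n □ cycleGraph n with hG
  have hne := prod_ediam_ne_top n (by omega)
  have hdiam : 2 * k ≤ G.diam := prod_diam_ge k hk
  have harith : (n ^ 2 - 2) / 2 * (k + 2) + 2 = (2 * k * k - 1) * (k + 2) + 2 := by
    have h1 : n ^ 2 = 2 * (2 * k * k) := by rw [hn]; ring
    have h2 : (n ^ 2 - 2) / 2 = 2 * k * k - 1 := by rw [h1]; omega
    rw [h2]
  rw [harith]
  -- the set of spans is nonempty
  have hnonempty : {s | ∃ c : Fin n × Fin n → ℕ, IsRadioLabeling G c ∧ labelSpan c = s}.Nonempty := by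
    classical
    let eqv := Fintype.equivFin (Fin n × Fin n)
    refine ⟨labelSpan (fun v => 1 + (eqv v).val * (G.diam + 1)), _, ⟨⟨fun v => by omega, ?_⟩, rfl⟩⟩
    intro u v huv
    have hne' : (eqv u).val ≠ (eqv v).val := by
      simp only [ne_eq, Fin.val_eq_val, EmbeddingLike.apply_eq_iff_eq]
      exact huv
    set a := (eqv u).val
    set b := (eqv v).val
    have hdist : G.diam + 1 ≤ Nat.dist (1 + a * (G.diam + 1)) (1 + b * (G.diam + 1)) := by
      rcases Nat.lt_or_ge a b with h | h
      · have hmul : a * (G.diam + 1) + (G.diam + 1) ≤ b * (G.diam + 1) := by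
          calc a * (G.diam + 1) + (G.diam + 1) = (a + 1) * (G.diam + 1) := by ring
            _ ≤ b * (G.diam + 1) := Nat.mul_le_mul_right _ (by omega)
        rw [Nat.dist_eq_sub_of_le (by omega)]
        omega
      · have h' : b < a := by omega
        have hmul : b * (G.diam + 1) + (G.diam + 1) ≤ a * (G.diam + 1) := by
          calc b * (G.diam + 1) + (G.diam + 1) = (b + 1) * (G.diam + 1) := by ring
            _ ≤ a * (G.diam + 1) := Nat.mul_le_mul_right _ (by omega)
        rw [Nat.dist_eq_sub_of_le_right (by omega)]
        omega
    omega
  refine le_csInf hnonempty ?_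
  rintro s ⟨c, ⟨hpos, hradio⟩, rfl⟩
  -- c is injective
  have hinj : Function.Injective c := by
    intro u v huv
    by_contra hc
    have h1 := hradio u v hc
    rw [huv, Nat.dist_self] at h1
    have h2 : G.dist u v ≤ G.diam := dist_le_diam hne
    omega
  classical
  set s := Finset.image c Finset.univ with hs
  have hcard : s.card = 4 * k * k := by
    rw [hs, Finset.card_image_of_injective _ hinj, Finset.card_univ, Fintype.card_prod,
      Fintype.card_fin, hn]
    ring
  set f := s.orderEmbOfFin hcard with hf
  have hmem : ∀ i, f i ∈ s := fun i => Finset.orderEmbOfFin_mem s hcard i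
  have hvert : ∀ i : Fin (4 * k * k), ∃ v, c v = f i := by
    intro i
    obtain ⟨v, _, hv⟩ := Finset.mem_image.mp (hmem i)
    exact ⟨v, hv⟩
  choose vert hvertc using hvert
  have hmono : ∀ {i j : Fin (4 * k * k)}, i < j → f i < f j := fun h => f.strictMono h
  -- the key triple estimate
  have key : ∀ j : ℕ, (h : 2 * j < 4 * k * k) → 1 + j * (k + 2) ≤ f ⟨2 * j, h⟩ := by
    intro j
    induction j with
    | zero =>
      intro h
      have := hpos (vert ⟨0, h⟩)
      rw [hvertc] at this
      simpa using this
    | succ j ih =>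
      intro h
      have h0 : 2 * j < 4 * k * k := by omega
      have h1 : 2 * j + 1 < 4 * k * k := by omega
      have hih := ih h0
      set i0 : Fin (4 * k * k) := ⟨2 * j, h0⟩
      set i1 : Fin (4 * k * k) := ⟨2 * j + 1, h1⟩
      set i2 : Fin (4 * k * k) := ⟨2 * (j + 1), h⟩
      have hlt01 : f i0 < f i1 := hmono (by simp [i0, i1, Fin.lt_def])
      have hlt12 : f i1 < f i2 := hmono (by simp [i1, i2, Fin.lt_def]; omega)
      set u := vert i0
      set v := vert i1
      set w := vert i2
      have hcu : c u = f i0 := hvertc i0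
      have hcv : c v = f i1 := hvertc i1
      have hcw : c w = f i2 := hvertc i2
      have huv : u ≠ v := fun hh => by rw [hh] at hcu; omega
      have hvw : v ≠ w := fun hh => by rw [hh] at hcv; omega
      have huw : u ≠ w := fun hh => by rw [hh] at hcu; omega
      have r1 := hradio u v huv
      have r2 := hradio v w hvw
      have r3 := hradio u w huw
      rw [hcu, hcv, Nat.dist_eq_sub_of_le hlt01.le] at r1
      rw [hcv, hcw, Nat.dist_eq_sub_of_le hlt12.le] at r2
      rw [hcu, hcw, Nat.dist_eq_sub_of_le (hlt01.trans hlt12).le] at r3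
      have hper := prod_perimeter n hn2 u v w
      rw [← hG] at hper
      have hmul : (j + 1) * (k + 2) = j * (k + 2) + (k + 2) := by ring
      omega
  have hq : 4 ≤ k * k := Nat.mul_le_mul hk hk
  have ha1 : 2 * k * k = 2 * (k * k) := by ring
  have ha2 : 4 * k * k = 4 * (k * k) := by ring
  have hfin : 2 * (2 * k * k - 1) < 4 * k * k := by omega
  have hlast : 2 * (2 * k * k - 1) + 1 < 4 * k * k := by omega
  have hkey := key (2 * k * k - 1) hfin
  have hstep : f ⟨2 * (2 * k * k - 1), hfin⟩ < f ⟨2 * (2 * k * k - 1) + 1, hlast⟩ :=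
    hmono (by simp [Fin.lt_def])
  have hspan : f ⟨2 * (2 * k * k - 1) + 1, hlast⟩ ≤ labelSpan c := by
    rw [← hvertc ⟨2 * (2 * k * k - 1) + 1, hlast⟩]
    exact Finset.le_sup (Finset.mem_univ _)
  have hexpand : 1 + (2 * k * k - 1) * (k + 2) + 1 = (2 * k * k - 1) * (k + 2) + 2 := by omega
  omega
end

section
/- Let k ≥ 1 and n = 2k + 1. For any three vertices u, v, w of the Cartesian product graph C_n □ C_n, the sum of pairwise distances satisfies d(u,v) + d(v,w) + d(u,w) ≤ 2·diam(C_n □ C_n) + 2 = 4k + 2. -/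
open SimpleGraph

/- ### Auxiliary lemmas -/

private lemma fin_sub_val {n : ℕ} (a b : Fin n) :
    (b.val ≤ a.val ∧ (a - b).val = a.val - b.val) ∨
      (a.val < b.val ∧ (a - b).val = n + a.val - b.val) := by
  have ha := a.is_lt
  have hb := b.is_lt
  have h : (a - b).val = (n - b.val + a.val) % n := by rw [Fin.sub_def]
  rcases le_or_gt b.val a.val with hle | hlt
  · left
    refine ⟨hle, ?_⟩
    have e : n - b.val + a.val = (a.val - b.val) + n := by omega
    rw [h, e, Nat.add_mod_right, Nat.mod_eq_of_lt (by omega)]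
  · right
    refine ⟨hlt, ?_⟩
    rw [h, Nat.mod_eq_of_lt (by omega)]
    omega

private lemma cyc_connected {n : ℕ} (hn : 1 ≤ n) : (cycleGraph n).Connected := by
  cases n with
  | zero => omega
  | succ m => exact cycleGraph_connected

private lemma cyc_walk_lower {n : ℕ} :
    ∀ {a b : Fin n} (p : (cycleGraph n).Walk a b),
      min ((a - b).val) ((b - a).val) ≤ p.length := by
  intro a b p
  induction p with
  | nil =>
    rename_i x
    have := fin_sub_val x x
    simp only [SimpleGraph.Walk.length_nil]
    omega
  | @cons a c b h p ih =>
    rw [cycleGraph_adj'] at h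
    rw [SimpleGraph.Walk.length_cons]
    have hb := b.is_lt
    have ha := a.is_lt
    have hc := c.is_lt
    rcases fin_sub_val a b with h1 | h1 <;>
    rcases fin_sub_val b a with h2 | h2 <;>
    rcases fin_sub_val c b with h3 | h3 <;>
    rcases fin_sub_val b c with h4 | h4 <;>
    rcases fin_sub_val a c with h5 | h5 <;>
    rcases fin_sub_val c a with h6 | h6 <;>
    omega

open Fin.NatCast Fin.CommRing in
private lemma cyc_dist_add {n : ℕ} [NeZero n] (hn : 2 ≤ n) (a : Fin n) (m : ℕ) :
    (cycleGraph n).dist a (a + (m : Fin n)) ≤ m := by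
  induction m with
  | zero => simp
  | succ m ih =>
    have hconn := cyc_connected (by omega : 1 ≤ n)
    have hadj : (cycleGraph n).Adj (a + (m : Fin n)) (a + ((m + 1 : ℕ) : Fin n)) := by
      rw [cycleGraph_adj']
      right
      have e : (a + ((m + 1 : ℕ) : Fin n)) - (a + (m : Fin n)) = 1 := by
        push_cast
        ring
      rw [e, Fin.val_one', Nat.mod_eq_of_lt (by omega)]
    calc (cycleGraph n).dist a (a + ((m + 1 : ℕ) : Fin n))
        ≤ (cycleGraph n).dist a (a + (m : Fin n)) +
            (cycleGraph n).dist (a + (m : Fin n)) (a + ((m + 1 : ℕ) : Fin n)) :=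
          hconn.dist_triangle
      _ ≤ m + 1 := by
          have := (SimpleGraph.dist_eq_one_iff_adj).mpr hadj
          omega

open Fin.NatCast Fin.CommRing in
private lemma cyc_dist_le {n : ℕ} (hn : 2 ≤ n) (a b : Fin n) :
    (cycleGraph n).dist a b ≤ (b - a).val := by
  haveI : NeZero n := ⟨by omega⟩
  have h := cyc_dist_add hn a ((b - a).val)
  rwa [Fin.cast_val_eq_self, show a + (b - a) = b by ring] at h

private lemma cyc_dist_eq {n : ℕ} (hn : 2 ≤ n) (a b : Fin n) :
    (cycleGraph n).dist a b = min ((a - b).val) ((b - a).val) := by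
  refine le_antisymm (le_min ?_ (cyc_dist_le hn a b)) ?_
  · rw [SimpleGraph.dist_comm]
    exact cyc_dist_le hn b a
  · obtain ⟨p, hp⟩ := (cyc_connected (by omega : 1 ≤ n)).exists_walk_length_eq_dist a b
    rw [← hp]
    exact cyc_walk_lower p

private lemma boxProd_walk_lower {V W : Type*} {G : SimpleGraph V} {H : SimpleGraph W}
    (hG : G.Connected) (hH : H.Connected) :
    ∀ {x y : V × W} (p : (G □ H).Walk x y),
      G.dist x.1 y.1 + H.dist x.2 y.2 ≤ p.length := by
  intro x y p
  induction p with
  | nil => simp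
  | @cons x z y h p ih =>
    rw [boxProd_adj] at h
    rw [SimpleGraph.Walk.length_cons]
    rcases h with ⟨h1, h2⟩ | ⟨h1, h2⟩
    · have t : G.dist x.1 y.1 ≤ G.dist x.1 z.1 + G.dist z.1 y.1 := hG.dist_triangle
      have e : G.dist x.1 z.1 = 1 := SimpleGraph.dist_eq_one_iff_adj.mpr h1
      rw [← h2] at ih
      omega
    · have t : H.dist x.2 y.2 ≤ H.dist x.2 z.2 + H.dist z.2 y.2 := hH.dist_triangle
      have e : H.dist x.2 z.2 = 1 := SimpleGraph.dist_eq_one_iff_adj.mpr h1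
      rw [← h2] at ih
      omega

private lemma boxProd_dist_eq {V W : Type*} {G : SimpleGraph V} {H : SimpleGraph W}
    (hG : G.Connected) (hH : H.Connected) (x y : V × W) :
    (G □ H).dist x y = G.dist x.1 y.1 + H.dist x.2 y.2 := by
  refine le_antisymm ?_ ?_
  · obtain ⟨p, hp⟩ := hG.exists_walk_length_eq_dist x.1 y.1
    obtain ⟨q, hq⟩ := hH.exists_walk_length_eq_dist x.2 y.2
    have h := SimpleGraph.dist_le ((p.boxProdLeft H x.2).append (q.boxProdRight G y.1))
    rw [SimpleGraph.Walk.length_append] at h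
    have l1 : (p.boxProdLeft H x.2).length = p.length := SimpleGraph.Walk.length_map _ _
    have l2 : (q.boxProdRight G y.1).length = q.length := SimpleGraph.Walk.length_map _ _
    rw [l1, l2] at h
    simpa [SimpleGraph.Walk.boxProdLeft, SimpleGraph.Walk.boxProdRight,
      SimpleGraph.Walk.length_map, hp, hq] using h
  · obtain ⟨p, hp⟩ := (hG.boxProd hH).exists_walk_length_eq_dist x y
    rw [← hp]
    exact boxProd_walk_lower hG hH p

/-- for `n = 2k + 1`, `k ≥ 1`, any three vertices of `C_n □ C_n` have pairwise
distance sum at most `2 · diam(C_n □ C_n) + 2 = 4k + 2`. -/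
theorem sum_dist_le_two_diam_add_two_odd (n k : ℕ) (hk : 1 ≤ k) (hn : n = 2 * k + 1)
    (u v w : Fin n × Fin n) :
    (cycleGraph n □ cycleGraph n).dist u v + (cycleGraph n □ cycleGraph n).dist v w +
        (cycleGraph n □ cycleGraph n).dist u w ≤ 2 * (cycleGraph n □ cycleGraph n).diam + 2 ∧
      2 * (cycleGraph n □ cycleGraph n).diam + 2 = 4 * k + 2 := by
  have hn2 : 2 ≤ n := by omega
  haveI : NeZero n := ⟨by omega⟩
  set P := cycleGraph n □ cycleGraph n with hP
  have hc : (cycleGraph n).Connected := cyc_connected (by omega)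
  have hPc : P.Connected := hc.boxProd hc
  have hdist : ∀ x y : Fin n × Fin n,
      P.dist x y = (cycleGraph n).dist x.1 y.1 + (cycleGraph n).dist x.2 y.2 :=
    boxProd_dist_eq hc hc
  -- every cycle distance is at most k
  have hub : ∀ a b : Fin n, (cycleGraph n).dist a b ≤ k := by
    intro a b
    rw [cyc_dist_eq hn2]
    rcases fin_sub_val a b with h1 | h1 <;> rcases fin_sub_val b a with h2 | h2 <;> omega
  have hPub : ∀ x y : Fin n × Fin n, P.dist x y ≤ 2 * k := by
    intro x y
    rw [hdist]
    have := hub x.1 y.1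
    have := hub x.2 y.2
    omega
  -- diameter computation
  have hed : P.ediam ≤ ((2 * k : ℕ) : ℕ∞) := by
    apply ediam_le_of_edist_le
    intro x y
    obtain ⟨p, hp⟩ := hPc.exists_walk_length_eq_dist x y
    calc P.edist x y ≤ (p.length : ℕ∞) := SimpleGraph.edist_le p
      _ ≤ ((2 * k : ℕ) : ℕ∞) := by
          rw [Nat.cast_le, hp]
          exact hPub x y
  have hdle : P.diam ≤ 2 * k := by
    have h := ENat.toNat_le_toNat hed (ENat.coe_ne_top _)
    rwa [ENat.toNat_coe] at h
  have hkn : k < n := by omega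
  have hdge : 2 * k ≤ P.diam := by
    have hne : P.ediam ≠ ⊤ := ne_top_of_le_ne_top (ENat.coe_ne_top _) hed
    have h1 := SimpleGraph.dist_le_diam hne
      (u := ((0 : Fin n), (0 : Fin n))) (v := ((⟨k, hkn⟩ : Fin n), (⟨k, hkn⟩ : Fin n)))
    have h2 : (cycleGraph n).dist (0 : Fin n) (⟨k, hkn⟩ : Fin n) = k := by
      rw [cyc_dist_eq hn2]
      rcases fin_sub_val (0 : Fin n) (⟨k, hkn⟩ : Fin n) with h3 | h3 <;>
      rcases fin_sub_val (⟨k, hkn⟩ : Fin n) (0 : Fin n) with h4 | h4 <;>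
      simp only [Fin.val_zero] at h3 h4 <;> omega
    rw [hdist] at h1
    simp only [h2] at h1
    omega
  have hdiam : P.diam = 2 * k := le_antisymm hdle hdge
  -- per-coordinate three-point bound
  have tri : ∀ a b c : Fin n,
      (cycleGraph n).dist a b + (cycleGraph n).dist b c + (cycleGraph n).dist a c ≤ n := by
    intro a b c
    rw [cyc_dist_eq hn2, cyc_dist_eq hn2, cyc_dist_eq hn2]
    rcases fin_sub_val a b with h1 | h1 <;>
    rcases fin_sub_val b a with h2 | h2 <;>
    rcases fin_sub_val b c with h3 | h3 <;>
    rcases fin_sub_val c b with h4 | h4 <;>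
    rcases fin_sub_val a c with h5 | h5 <;>
    rcases fin_sub_val c a with h6 | h6 <;>
    omega
  constructor
  · rw [hdist, hdist, hdist, hdiam]
    have t1 := tri u.1 v.1 w.1
    have t2 := tri u.2 v.2 w.2
    omega
  · rw [hdiam]
    omega
end
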